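/- Over F_2, the derivation Q_0 (determined by Q_0(x) = x² on linear forms) on the symmetric algebra S*(W) of a nonzero finite dimensional F_2-vector space W yields an exact complex 0 → S^1(W) → S^2(W) → S^3(W) → ⋯; i.e., ker(Q_0: S^n → S^{n+1}) = im(Q_0: S^{n-1} → S^n) for all n ≥ 1. -/

import Mathlib

open MvPolynomial

/-- The Milnor derivation `Q_0` on the symmetric (polynomial) algebra over `𝔽₂`:
the unique derivation with `Q_0 x = x²` on linear forms. -/
noncomputable def Q0der (σ : Type) :
    Derivation (ZMod 2) (MvPolynomial σ (ZMod 2)) (MvPolynomial σ (ZMod 2)) :=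
  MvPolynomial.mkDerivation (ZMod 2) (fun s => X s ^ 2)

section Aux

lemma max'_eq_of_eq {α : Type*} [LinearOrder α] {s t : Finset α} (h : s = t)
    {hs : s.Nonempty} {ht : t.Nonempty} : s.max' hs = t.max' ht := by subst h; rfl

variable {σ : Type}

lemma char2 (x : MvPolynomial σ (ZMod 2)) : x + x = 0 := by
  rw [← two_smul (ZMod 2) x, show (2 : ZMod 2) = 0 by decide, zero_smul]

lemma cast_even {k : ℕ} (h : Even k) : (k : ZMod 2) = 0 := by
  rw [← ZMod.natCast_mod k 2, Nat.even_iff.mp h, Nat.cast_zero]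

lemma cast_odd {k : ℕ} (h : ¬ Even k) : (k : ZMod 2) = 1 := by
  rw [← ZMod.natCast_mod k 2, Nat.odd_iff.mp (Nat.not_even_iff_odd.mp h), Nat.cast_one]

lemma degree_add' (x y : σ →₀ ℕ) : (x + y).degree = x.degree + y.degree := by
  simp only [Finsupp.degree_eq_weight_one]
  exact map_add _ x y

lemma degree_single' (s : σ) : (Finsupp.single s 1).degree = 1 := by
  simp [Finsupp.degree_single]

lemma sub_add_self' (a : σ →₀ ℕ) {s : σ} (hs : 1 ≤ a s) :
    a - Finsupp.single s 1 + Finsupp.single s 1 = a := by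
  classical
  ext x
  simp only [Finsupp.add_apply, Finsupp.tsub_apply, Finsupp.single_apply]
  split_ifs with h
  · subst h; omega
  · omega

lemma degree_sub_single {a : σ →₀ ℕ} {s : σ} (hs : 1 ≤ a s) :
    (a - Finsupp.single s 1).degree = a.degree - 1 := by
  have h := congrArg Finsupp.degree (sub_add_self' a hs)
  rw [degree_add', degree_single'] at h
  omega

variable [LinearOrder σ]

/-- The contracting homotopy on monomials: remove one power of the largest variable
if its exponent is even (and positive); otherwise zero. -/
noncomputable def hMon (a : σ →₀ ℕ) : MvPolynomial σ (ZMod 2) :=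
  if h : a.support.Nonempty then
    (if Even (a (a.support.max' h)) then
      monomial (a - Finsupp.single (a.support.max' h) 1) (1 : ZMod 2) else 0)
  else 0

lemma hMon_eq (a : σ →₀ ℕ) (h : a.support.Nonempty) :
    hMon a = if Even (a (a.support.max' h)) then
      monomial (a - Finsupp.single (a.support.max' h) 1) (1 : ZMod 2) else 0 := dif_pos h

/-- The contracting homotopy as a linear map. -/
noncomputable def hmap : MvPolynomial σ (ZMod 2) →ₗ[ZMod 2] MvPolynomial σ (ZMod 2) :=
  (MvPolynomial.basisMonomials σ (ZMod 2)).constr (ZMod 2) hMon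

lemma hmap_monomial (a : σ →₀ ℕ) : hmap (monomial a (1 : ZMod 2)) = hMon a := by
  have := (MvPolynomial.basisMonomials σ (ZMod 2)).constr_basis (ZMod 2) hMon a
  simpa [hmap, MvPolynomial.coe_basisMonomials] using this

lemma sub_add_two (a : σ →₀ ℕ) (t : σ) (ht : 1 ≤ a t) :
    a - Finsupp.single t 1 + Finsupp.single t 2 = a + Finsupp.single t 1 := by
  classical
  ext x
  simp only [Finsupp.add_apply, Finsupp.tsub_apply, Finsupp.single_apply]
  split_ifs with h
  · subst h; omega
  · omega

lemma add_sub_comm' (a : σ →₀ ℕ) {s t : σ} (hst : t ≠ s) :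
    a + Finsupp.single t 1 - Finsupp.single s 1
      = a - Finsupp.single s 1 + Finsupp.single t 1 := by
  classical
  ext x
  simp only [Finsupp.add_apply, Finsupp.tsub_apply, Finsupp.single_apply]
  split_ifs with h1 h2 h2
  · exact absurd (h1.trans h2.symm) hst
  · omega
  · omega
  · omega

lemma add_single_sub_self (a : σ →₀ ℕ) (s : σ) :
    a + Finsupp.single s 1 - Finsupp.single s 1 = a := by
  classical
  ext x
  simp only [Finsupp.add_apply, Finsupp.tsub_apply, Finsupp.single_apply]
  split_ifs <;> omega

lemma support_add_single {a : σ →₀ ℕ} {t : σ} (ht : t ∈ a.support) :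
    (a + Finsupp.single t 1).support = a.support := by
  have h1 : a t ≠ 0 := Finsupp.mem_support_iff.mp ht
  classical
  ext x
  simp only [Finsupp.mem_support_iff, Finsupp.add_apply, Finsupp.single_apply]
  split_ifs with h
  · subst h; omega
  · omega

lemma support_sub_single {a : σ →₀ ℕ} {s : σ} (hs : 2 ≤ a s) :
    (a - Finsupp.single s 1).support = a.support := by
  classical
  ext x
  simp only [Finsupp.mem_support_iff, Finsupp.tsub_apply, Finsupp.single_apply]
  split_ifs with h
  · subst h; omega
  · omega

/-- `Q0` on a monomial, as an explicit sum. -/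
lemma Q0_monomial (a : σ →₀ ℕ) :
    Q0der σ (monomial a (1 : ZMod 2)) =
      ∑ t ∈ a.support, (a t : ZMod 2) • monomial (a + Finsupp.single t 1) (1 : ZMod 2) := by
  rw [Q0der, mkDerivation_monomial, one_smul, Finsupp.sum]
  refine Finset.sum_congr rfl fun t ht => ?_
  have ht1 : 1 ≤ a t := Nat.one_le_iff_ne_zero.mpr (Finsupp.mem_support_iff.mp ht)
  have hX : (X t : MvPolynomial σ (ZMod 2)) ^ 2 = monomial (Finsupp.single t 2) 1 := by
    rw [X_pow_eq_monomial]
  rw [hX, smul_eq_mul, monomial_mul, sub_add_two a t ht1, smul_monomial, smul_eq_mul]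

/-- The key homotopy identity on nonconstant monomials: `Q0 ∘ h + h ∘ Q0 = id`. -/
lemma homotopy (a : σ →₀ ℕ) (ha : a ≠ 0) :
    Q0der σ (hMon a) + hmap (Q0der σ (monomial a (1 : ZMod 2)))
      = monomial a (1 : ZMod 2) := by
  have hne : a.support.Nonempty := Finsupp.support_nonempty_iff.mpr ha
  set s := a.support.max' hne with hs_def
  have hs : s ∈ a.support := a.support.max'_mem hne
  have hs1 : 1 ≤ a s := Nat.one_le_iff_ne_zero.mpr (Finsupp.mem_support_iff.mp hs)
  have hrhs : hmap (Q0der σ (monomial a (1 : ZMod 2)))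
      = ∑ t ∈ a.support, (a t : ZMod 2) • hMon (a + Finsupp.single t 1) := by
    rw [Q0_monomial, map_sum]
    refine Finset.sum_congr rfl fun t ht => ?_
    rw [map_smul, hmap_monomial]
  have hMon_add : ∀ t ∈ a.support, hMon (a + Finsupp.single t 1) =
      if Even ((a + Finsupp.single t 1 : σ →₀ ℕ) s) then
        monomial (a + Finsupp.single t 1 - Finsupp.single s 1) (1 : ZMod 2) else 0 := by
    intro t ht
    have hsupp := support_add_single ht
    have hne' : (a + Finsupp.single t 1).support.Nonempty := by
      rw [hsupp]; exact hne
    have hmax' : (a + Finsupp.single t 1).support.max' hne' = s := max'_eq_of_eq hsupp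
    rw [hMon_eq _ hne', hmax']
  rw [hrhs]
  by_cases hev : Even (a s)
  · -- even case
    have hs2 : 2 ≤ a s := by rcases hev with ⟨k, hk⟩; omega
    have hsupp := support_sub_single hs2
    have hlhs : Q0der σ (hMon a)
        = ∑ t ∈ a.support, (((a - Finsupp.single s 1 : σ →₀ ℕ) t : ℕ) : ZMod 2) •
            monomial ((a - Finsupp.single s 1 : σ →₀ ℕ) + Finsupp.single t 1) (1 : ZMod 2) := by
      rw [hMon_eq a hne, ← hs_def, if_pos hev, Q0_monomial, hsupp]
    rw [hlhs, ← Finset.sum_add_distrib]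
    rw [Finset.sum_eq_single_of_mem s hs]
    · -- value at s
      have h1 : (a - Finsupp.single s 1 : σ →₀ ℕ) s = a s - 1 := by
        classical
        simp [Finsupp.tsub_apply]
      have hodd : ¬ Even (a s - 1) := by
        rw [Nat.even_iff]
        rcases hev with ⟨k, hk⟩
        omega
      rw [h1, cast_odd hodd, cast_even hev, one_smul, zero_smul, add_zero,
        sub_add_self' a hs1]
    · -- other terms vanish
      intro t ht hts
      have h2 : (a - Finsupp.single s 1 : σ →₀ ℕ) t = a t := by
        classical
        simp [Finsupp.tsub_apply, Finsupp.single_apply, Ne.symm hts]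
      have h3 : (a + Finsupp.single t 1 : σ →₀ ℕ) s = a s := by
        classical
        simp [Finsupp.add_apply, Finsupp.single_apply, hts]
      rw [hMon_add t ht, h3, if_pos hev, add_sub_comm' a hts, h2]
      exact char2 _
  · -- odd case
    have hlhs : Q0der σ (hMon a) = 0 := by
      rw [hMon_eq a hne, ← hs_def, if_neg hev, map_zero]
    rw [hlhs, zero_add]
    rw [Finset.sum_eq_single_of_mem s hs]
    · have h3 : (a + Finsupp.single s 1 : σ →₀ ℕ) s = a s + 1 := by
        classical
        simp [Finsupp.add_apply, Finsupp.single_apply]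
      have hev' : Even (a s + 1) := by
        rcases Nat.not_even_iff_odd.mp hev with ⟨k, hk⟩
        exact ⟨k + 1, by omega⟩
      rw [hMon_add s hs, h3, if_pos hev', add_single_sub_self, cast_odd hev, one_smul]
    · intro t ht hts
      have h3 : (a + Finsupp.single t 1 : σ →₀ ℕ) s = a s := by
        classical
        simp [Finsupp.add_apply, Finsupp.single_apply, hts]
      rw [hMon_add t ht, h3, if_neg hev, smul_zero]

lemma Q0_sq (p : MvPolynomial σ (ZMod 2)) : Q0der σ (Q0der σ p) = 0 := by
  induction p using MvPolynomial.induction_on with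
  | C a =>
    simp only [← MvPolynomial.algebraMap_eq, Derivation.map_algebraMap, map_zero]
  | add p q hp hq =>
    rw [map_add, map_add, hp, hq, add_zero]
  | mul_X p i hp =>
    have hx : Q0der σ (X i) = X i ^ 2 := by rw [Q0der, mkDerivation_X]
    have hsq : Q0der σ ((X i : MvPolynomial σ (ZMod 2)) ^ 2) = 0 := by
      rw [pow_two, Derivation.leibniz, smul_eq_mul]
      exact char2 _
    have k0 : Q0der σ (p * X i) = p * X i ^ 2 + X i * Q0der σ p := by
      rw [Derivation.leibniz, smul_eq_mul, smul_eq_mul, hx]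
    have k1 : Q0der σ (p * X i ^ 2) = X i ^ 2 * Q0der σ p := by
      rw [Derivation.leibniz, smul_eq_mul, smul_eq_mul, hsq, mul_zero, zero_add]
    have k2 : Q0der σ (X i * Q0der σ p) = Q0der σ p * X i ^ 2 := by
      rw [Derivation.leibniz, smul_eq_mul, smul_eq_mul, hp, hx, mul_zero, zero_add]
    rw [k0, map_add, k1, k2, mul_comm]
    exact char2 _

lemma hMon_homog {a : σ →₀ ℕ} {n : ℕ} (hdeg : a.degree = n) :
    (hMon a).IsHomogeneous (n - 1) := by
  by_cases hne : a.support.Nonempty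
  · rw [hMon_eq a hne]
    split_ifs with hev
    · apply isHomogeneous_monomial
      have hs1 : 1 ≤ a (a.support.max' hne) :=
        Nat.one_le_iff_ne_zero.mpr (Finsupp.mem_support_iff.mp (a.support.max'_mem hne))
      rw [degree_sub_single hs1, hdeg]
    · exact isHomogeneous_zero _ _ _
  · rw [hMon, dif_neg hne]
    exact isHomogeneous_zero _ _ _

end Aux

/-- Over `𝔽₂`, for a nonzero finite dimensional vector space `W`, the complex
`0 → S¹(W) → S²(W) → ⋯` given by `Q_0` is exact: for `n ≥ 1`, a homogeneous polynomial of
degree `n` is killed by `Q_0` if and only if it is `Q_0` of a homogeneous polynomial of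
degree `n - 1`. -/
theorem stmt10 (σ : Type) [Fintype σ] [Nonempty σ] (n : ℕ) (hn : 1 ≤ n) :
    ∀ p : MvPolynomial σ (ZMod 2), p.IsHomogeneous n →
      (Q0der σ p = 0 ↔ ∃ q : MvPolynomial σ (ZMod 2),
        q.IsHomogeneous (n - 1) ∧ p = Q0der σ q) := by
  letI : LinearOrder σ := LinearOrder.lift' (Fintype.equivFin σ) (Fintype.equivFin σ).injective
  intro p hp
  constructor
  · intro hQ
    -- every monomial of p has degree n, in particular is nonzero
    have hdeg : ∀ a ∈ p.support, a.degree = n := by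
      intro a ha
      have := hp (MvPolynomial.mem_support_iff.mp ha)
      rw [Finsupp.degree_eq_weight_one]
      exact this
    have h0 : ∀ a ∈ p.support, a ≠ 0 := by
      intro a ha h
      have := hdeg a ha
      rw [h, map_zero] at this
      omega
    have has : p = ∑ a ∈ p.support, (coeff a p) • monomial a (1 : ZMod 2) := by
      conv_lhs => rw [p.as_sum]
      refine Finset.sum_congr rfl fun a _ => ?_
      rw [smul_monomial, smul_eq_mul, mul_one]
    refine ⟨hmap p, ?_, ?_⟩
    · -- homogeneity of hmap p
      rw [← mem_homogeneousSubmodule, has, map_sum]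
      refine Submodule.sum_mem _ fun a ha => ?_
      rw [map_smul]
      refine Submodule.smul_mem _ _ ?_
      rw [hmap_monomial, mem_homogeneousSubmodule]
      exact hMon_homog (hdeg a ha)
    · -- p = Q0 (hmap p)
      have e1 : hmap p = ∑ a ∈ p.support, coeff a p • hMon a := by
        conv_lhs => rw [has]
        rw [map_sum]
        exact Finset.sum_congr rfl fun a _ => by rw [map_smul, hmap_monomial]
      have e3 : ∀ a ∈ p.support, Q0der σ (hMon a)
          = monomial a (1 : ZMod 2) + hmap (Q0der σ (monomial a (1 : ZMod 2))) := by
        intro a ha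
        have hh := homotopy a (h0 a ha)
        calc Q0der σ (hMon a)
            = Q0der σ (hMon a) + (hmap (Q0der σ (monomial a (1 : ZMod 2)))
              + hmap (Q0der σ (monomial a (1 : ZMod 2)))) := by rw [char2, add_zero]
          _ = (Q0der σ (hMon a) + hmap (Q0der σ (monomial a (1 : ZMod 2))))
              + hmap (Q0der σ (monomial a (1 : ZMod 2))) := by ring
          _ = monomial a (1 : ZMod 2) + hmap (Q0der σ (monomial a (1 : ZMod 2))) := by
              rw [hh]
      have e4 : Q0der σ p
          = ∑ a ∈ p.support, coeff a p • Q0der σ (monomial a (1 : ZMod 2)) := by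
        conv_lhs => rw [has]
        rw [map_sum]
        exact Finset.sum_congr rfl fun a _ => Derivation.map_smul _ _ _
      have key : Q0der σ (hmap p) = p := by
        calc Q0der σ (hmap p)
            = ∑ a ∈ p.support, coeff a p •
                (monomial a (1 : ZMod 2) + hmap (Q0der σ (monomial a (1 : ZMod 2)))) := by
              rw [e1, map_sum]
              exact Finset.sum_congr rfl fun a ha => by rw [Derivation.map_smul, e3 a ha]
          _ = (∑ a ∈ p.support, coeff a p • monomial a (1 : ZMod 2))
              + ∑ a ∈ p.support, coeff a p • hmap (Q0der σ (monomial a (1 : ZMod 2))) := by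
              rw [← Finset.sum_add_distrib]
              exact Finset.sum_congr rfl fun a _ => smul_add _ _ _
          _ = p + hmap (∑ a ∈ p.support, coeff a p • Q0der σ (monomial a (1 : ZMod 2))) := by
              rw [← has, map_sum]
              congr 1
              exact Finset.sum_congr rfl fun a _ => (map_smul hmap _ _).symm
          _ = p := by rw [← e4, hQ, map_zero, add_zero]
      exact key.symm
  · rintro ⟨q, -, rfl⟩
    exact Q0_sq q
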